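/- Let α > 0 be a real number and set γ := 2α + 1. Let Ω ⊆ ℝ² be open and let w, z, k : ℝ² → ℝ be twice continuously differentiable on Ω and satisfy on Ω the system ∂_t w + λ₃ ∂_y w = (α/(2γ)) σ² ∂_y k, ∂_t z + λ₁ ∂_y z = (α/(2γ)) σ² ∂_y k, ∂_t k + λ₂ ∂_y k = 0. Then the differentiated Riemann variables ẘ, z̊, k̊ satisfy at every point of Ω: ∂_t ẘ + λ₃ ∂_y ẘ = − ẘ·((1+α)/2 · ẘ + (1−α)/2 · z̊ + (α/(2γ)) σ k̊) + (α/(4γ)) σ k̊ (ẘ + z̊); ∂_t z̊ + λ₁ ∂_y z̊ = − z̊·((1−α)/2 · ẘ + (1+α)/2 · z̊ − (α/(2γ)) σ k̊) − (α/(4γ)) σ k̊ (ẘ + z̊); and ∂_t k̊ + λ₂ ∂_y k̊ = − (1/2) k̊ (ẘ + z̊). -/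

import Mathlib

/-- Partial derivative in the first (spatial, `y`) variable of a function on `ℝ × ℝ`. -/
noncomputable def pdy (f : ℝ × ℝ → ℝ) (p : ℝ × ℝ) : ℝ := fderiv ℝ f p (1, 0)

/-- Partial derivative in the second (time, `t`) variable of a function on `ℝ × ℝ`. -/
noncomputable def pdt (f : ℝ × ℝ → ℝ) (p : ℝ × ℝ) : ℝ := fderiv ℝ f p (0, 1)

open Filter Topology

section helpers
variable {f g : ℝ × ℝ → ℝ} {p v : ℝ × ℝ}

lemma pdv_add (hf : DifferentiableAt ℝ f p) (hg : DifferentiableAt ℝ g p) :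
    fderiv ℝ (fun q => f q + g q) p v = fderiv ℝ f p v + fderiv ℝ g p v := by
  rw [fderiv_fun_add hf hg]; simp

lemma pdv_sub (hf : DifferentiableAt ℝ f p) (hg : DifferentiableAt ℝ g p) :
    fderiv ℝ (fun q => f q - g q) p v = fderiv ℝ f p v - fderiv ℝ g p v := by
  rw [fderiv_fun_sub hf hg]; simp

lemma pdv_mul (hf : DifferentiableAt ℝ f p) (hg : DifferentiableAt ℝ g p) :
    fderiv ℝ (fun q => f q * g q) p v = fderiv ℝ f p v * g p + f p * fderiv ℝ g p v := by
  rw [fderiv_fun_mul hf hg]; simp [smul_eq_mul]; ring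

lemma pdv_const_mul (hf : DifferentiableAt ℝ f p) (c : ℝ) :
    fderiv ℝ (fun q => c * f q) p v = c * fderiv ℝ f p v := by
  rw [fderiv_const_mul hf]; simp

lemma pdv_sq (hf : DifferentiableAt ℝ f p) :
    fderiv ℝ (fun q => f q ^ 2) p v = 2 * f p * fderiv ℝ f p v := by
  have h : (fun q => f q ^ 2) = fun q => f q * f q := by funext q; ring
  rw [h, pdv_mul hf hf]; ring

lemma pd_diff2 {Ω : Set (ℝ × ℝ)} (hΩ : IsOpen Ω) (hp : p ∈ Ω)
    (hf : ContDiffOn ℝ 2 f Ω) (u : ℝ × ℝ) :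
    DifferentiableAt ℝ (fun q => fderiv ℝ f q u) p := by
  have h1 : ContDiffAt ℝ 1 (fderiv ℝ f) p :=
    (hf.contDiffAt (hΩ.mem_nhds hp)).fderiv_right (by norm_num)
  exact (h1.differentiableAt one_ne_zero).clm_apply (differentiableAt_const u)

lemma pd_swap {Ω : Set (ℝ × ℝ)} (hΩ : IsOpen Ω) (hp : p ∈ Ω)
    (hf : ContDiffOn ℝ 2 f Ω) (u v : ℝ × ℝ) :
    fderiv ℝ (fun q => fderiv ℝ f q u) p v = fderiv ℝ (fun q => fderiv ℝ f q v) p u := by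
  have hc : ContDiffAt ℝ 2 f p := hf.contDiffAt (hΩ.mem_nhds hp)
  have hd : DifferentiableAt ℝ (fderiv ℝ f) p :=
    (hc.fderiv_right (by norm_num)).differentiableAt one_ne_zero
  have hsym := hc.isSymmSndFDerivAt (by norm_num)
  have e : ∀ a b : ℝ × ℝ,
      fderiv ℝ (fun q => fderiv ℝ f q a) p b = fderiv ℝ (fderiv ℝ f) p b a := by
    intro a b
    rw [fderiv_clm_apply hd (differentiableAt_const a)]
    simp
  rw [e u v, e v u]
  exact hsym v u

end helpers

theorem statement0
    (α γ : ℝ) (hα : 0 < α) (hγ : γ = 2 * α + 1)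
    (Ω : Set (ℝ × ℝ)) (hΩ : IsOpen Ω)
    (w z k : ℝ × ℝ → ℝ)
    (hw : ContDiffOn ℝ 2 w Ω) (hz : ContDiffOn ℝ 2 z Ω) (hk : ContDiffOn ℝ 2 k Ω)
    (σ lam1 lam2 lam3 W Z K : ℝ × ℝ → ℝ)
    (hσ : σ = fun p => (w p - z p) / 2)
    (hl1 : lam1 = fun p => (1 - α) / 2 * w p + (1 + α) / 2 * z p)
    (hl2 : lam2 = fun p => (w p + z p) / 2)
    (hl3 : lam3 = fun p => (1 + α) / 2 * w p + (1 - α) / 2 * z p)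
    (hW : W = fun p => pdy w p - 1 / (2 * γ) * σ p * pdy k p)
    (hZ : Z = fun p => pdy z p + 1 / (2 * γ) * σ p * pdy k p)
    (hK : K = fun p => pdy k p)
    (heq1 : ∀ p ∈ Ω, pdt w p + lam3 p * pdy w p = α / (2 * γ) * σ p ^ 2 * pdy k p)
    (heq2 : ∀ p ∈ Ω, pdt z p + lam1 p * pdy z p = α / (2 * γ) * σ p ^ 2 * pdy k p)
    (heq3 : ∀ p ∈ Ω, pdt k p + lam2 p * pdy k p = 0) :
    ∀ p ∈ Ω,
      (pdt W p + lam3 p * pdy W p =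
        - W p * ((1 + α) / 2 * W p + (1 - α) / 2 * Z p + α / (2 * γ) * σ p * K p)
          + α / (4 * γ) * σ p * K p * (W p + Z p)) ∧
      (pdt Z p + lam1 p * pdy Z p =
        - Z p * ((1 - α) / 2 * W p + (1 + α) / 2 * Z p - α / (2 * γ) * σ p * K p)
          - α / (4 * γ) * σ p * K p * (W p + Z p)) ∧
      (pdt K p + lam2 p * pdy K p = - (1 / 2) * K p * (W p + Z p)) := by
  subst hW hZ hK
  simp only [pdy, pdt] at heq1 heq2 heq3 ⊢
  intro p hp
  have hmem : Ω ∈ 𝓝 p := hΩ.mem_nhds hp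
  -- differentiability at p
  have dw : DifferentiableAt ℝ w p := (hw.contDiffAt hmem).differentiableAt two_ne_zero
  have dz : DifferentiableAt ℝ z p := (hz.contDiffAt hmem).differentiableAt two_ne_zero
  have dk : DifferentiableAt ℝ k p := (hk.contDiffAt hmem).differentiableAt two_ne_zero
  have hσ' : σ = fun q => (1 / 2 : ℝ) * (w q - z q) := by rw [hσ]; funext q; ring
  have hl2' : lam2 = fun q => (1 / 2 : ℝ) * (w q + z q) := by rw [hl2]; funext q; ring
  have dσ : DifferentiableAt ℝ σ p := by rw [hσ']; exact (dw.sub dz).const_mul _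
  have dl1 : DifferentiableAt ℝ lam1 p := by
    rw [hl1]; exact (dw.const_mul _).add (dz.const_mul _)
  have dl2 : DifferentiableAt ℝ lam2 p := by rw [hl2']; exact (dw.add dz).const_mul _
  have dl3 : DifferentiableAt ℝ lam3 p := by
    rw [hl3]; exact (dw.const_mul _).add (dz.const_mul _)
  have dwy := pd_diff2 hΩ hp hw ((1:ℝ), (0:ℝ))
  have dwt := pd_diff2 hΩ hp hw ((0:ℝ), (1:ℝ))
  have dzy := pd_diff2 hΩ hp hz ((1:ℝ), (0:ℝ))
  have dzt := pd_diff2 hΩ hp hz ((0:ℝ), (1:ℝ))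
  have dky := pd_diff2 hΩ hp hk ((1:ℝ), (0:ℝ))
  have dkt := pd_diff2 hΩ hp hk ((0:ℝ), (1:ℝ))
  -- derivatives of the coefficient functions
  have pdσ : ∀ v : ℝ × ℝ, fderiv ℝ σ p v = (fderiv ℝ w p v - fderiv ℝ z p v) / 2 := by
    intro v
    rw [hσ', pdv_const_mul (dw.fun_sub dz), pdv_sub dw dz]; ring
  have pdl1 : ∀ v : ℝ × ℝ,
      fderiv ℝ lam1 p v = (1 - α) / 2 * fderiv ℝ w p v + (1 + α) / 2 * fderiv ℝ z p v := by
    intro v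
    rw [hl1, pdv_add (dw.const_mul _) (dz.const_mul _), pdv_const_mul dw, pdv_const_mul dz]
  have pdl2 : ∀ v : ℝ × ℝ,
      fderiv ℝ lam2 p v = (fderiv ℝ w p v + fderiv ℝ z p v) / 2 := by
    intro v
    rw [hl2', pdv_const_mul (dw.fun_add dz), pdv_add dw dz]; ring
  have pdl3 : ∀ v : ℝ × ℝ,
      fderiv ℝ lam3 p v = (1 + α) / 2 * fderiv ℝ w p v + (1 - α) / 2 * fderiv ℝ z p v := by
    intro v
    rw [hl3, pdv_add (dw.const_mul _) (dz.const_mul _), pdv_const_mul dw, pdv_const_mul dz]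
  -- point values
  have E1p := heq1 p hp
  have E2p := heq2 p hp
  have hσp : σ p = (w p - z p) / 2 := by rw [hσ]
  have hl1p : lam1 p = (1 - α) / 2 * w p + (1 + α) / 2 * z p := by rw [hl1]
  have hl2p : lam2 p = (w p + z p) / 2 := by rw [hl2]
  have hl3p : lam3 p = (1 + α) / 2 * w p + (1 - α) / 2 * z p := by rw [hl3]
  -- differentiated equations (in y)
  have hE1 : (fun q => fderiv ℝ w q (0, 1) + lam3 q * fderiv ℝ w q (1, 0)) =ᶠ[𝓝 p]
      fun q => α / (2 * γ) * σ q ^ 2 * fderiv ℝ k q (1, 0) :=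
    Filter.eventuallyEq_of_mem hmem fun q hq => heq1 q hq
  have hE2 : (fun q => fderiv ℝ z q (0, 1) + lam1 q * fderiv ℝ z q (1, 0)) =ᶠ[𝓝 p]
      fun q => α / (2 * γ) * σ q ^ 2 * fderiv ℝ k q (1, 0) :=
    Filter.eventuallyEq_of_mem hmem fun q hq => heq2 q hq
  have hE3 : (fun q => fderiv ℝ k q (0, 1) + lam2 q * fderiv ℝ k q (1, 0)) =ᶠ[𝓝 p]
      fun _ => (0 : ℝ) :=
    Filter.eventuallyEq_of_mem hmem fun q hq => heq3 q hq
  have E1y := DFunLike.congr_fun (hE1.fderiv_eq (𝕜 := ℝ)) ((1:ℝ), (0:ℝ))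
  have E2y := DFunLike.congr_fun (hE2.fderiv_eq (𝕜 := ℝ)) ((1:ℝ), (0:ℝ))
  have E3y := DFunLike.congr_fun (hE3.fderiv_eq (𝕜 := ℝ)) ((1:ℝ), (0:ℝ))
  rw [pdv_add dwt (dl3.fun_mul dwy), pdv_mul dl3 dwy,
      pdv_mul ((dσ.fun_pow 2).const_mul _) dky, pdv_const_mul (dσ.fun_pow 2), pdv_sq dσ,
      pdl3, pdσ, pd_swap hΩ hp hw ((0:ℝ), (1:ℝ)) ((1:ℝ), (0:ℝ))] at E1y
  rw [pdv_add dzt (dl1.fun_mul dzy), pdv_mul dl1 dzy,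
      pdv_mul ((dσ.fun_pow 2).const_mul _) dky, pdv_const_mul (dσ.fun_pow 2), pdv_sq dσ,
      pdl1, pdσ, pd_swap hΩ hp hz ((0:ℝ), (1:ℝ)) ((1:ℝ), (0:ℝ))] at E2y
  rw [pdv_add dkt (dl2.fun_mul dky), pdv_mul dl2 dky, pdl2,
      pd_swap hΩ hp hk ((0:ℝ), (1:ℝ)) ((1:ℝ), (0:ℝ)), fderiv_fun_const] at E3y
  simp only [Pi.zero_apply, ContinuousLinearMap.zero_apply] at E3y
  -- expansions of derivatives of W and Z
  have Wd : ∀ v : ℝ × ℝ,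
      fderiv ℝ (fun q => fderiv ℝ w q (1, 0) - 1 / (2 * γ) * σ q * fderiv ℝ k q (1, 0)) p v
        = fderiv ℝ (fun q => fderiv ℝ w q (1, 0)) p v
          - (1 / (2 * γ) * ((fderiv ℝ w p v - fderiv ℝ z p v) / 2) * fderiv ℝ k p (1, 0)
             + 1 / (2 * γ) * σ p * fderiv ℝ (fun q => fderiv ℝ k q (1, 0)) p v) := by
    intro v
    rw [pdv_sub dwy ((dσ.const_mul _).fun_mul dky), pdv_mul (dσ.const_mul _) dky,
        pdv_const_mul dσ, pdσ]
  have Zd : ∀ v : ℝ × ℝ,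
      fderiv ℝ (fun q => fderiv ℝ z q (1, 0) + 1 / (2 * γ) * σ q * fderiv ℝ k q (1, 0)) p v
        = fderiv ℝ (fun q => fderiv ℝ z q (1, 0)) p v
          + (1 / (2 * γ) * ((fderiv ℝ w p v - fderiv ℝ z p v) / 2) * fderiv ℝ k p (1, 0)
             + 1 / (2 * γ) * σ p * fderiv ℝ (fun q => fderiv ℝ k q (1, 0)) p v) := by
    intro v
    rw [pdv_add dzy ((dσ.const_mul _).fun_mul dky), pdv_mul (dσ.const_mul _) dky,
        pdv_const_mul dσ, pdσ]
  refine ⟨?_, ?_, ?_⟩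
  · rw [Wd, Wd]
    rw [hσp, hl3p] at E1y ⊢
    rw [hl2p] at E3y
    rw [hσp, hl3p] at E1p
    rw [hσp, hl1p] at E2p
    linear_combination E1y - ((w p - z p) / 2) / (2 * γ) * E3y
      - (fderiv ℝ k p (1, 0)) / (4 * γ) * E1p + (fderiv ℝ k p (1, 0)) / (4 * γ) * E2p
  · rw [Zd, Zd]
    rw [hσp, hl1p] at E2y ⊢
    rw [hl2p] at E3y
    rw [hσp, hl3p] at E1p
    rw [hσp, hl1p] at E2p
    linear_combination E2y + ((w p - z p) / 2) / (2 * γ) * E3y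
      + (fderiv ℝ k p (1, 0)) / (4 * γ) * E1p - (fderiv ℝ k p (1, 0)) / (4 * γ) * E2p
  · rw [hσp, hl2p]
    rw [hl2p] at E3y
    linear_combination E3y
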